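/- The class of separated locally proper maps of topological spaces is stable under base change: if f : Y → S is separated locally proper and g : S' → S is any continuous map, then the pullback f' : Y ×_S S' → S' is separated locally proper. -/

import Mathlib

open Set Topology Filter

/-- Locally proper (in the sense of the paper): every point `y` and neighborhood `V` of `y`
admit neighborhoods `U ∋ f y` and `N ⊆ f⁻¹' U ∩ V` of `y` such that the restriction
`N → U` of `f` is proper, i.e. separated and universally closed. -/
def IsLocallyProper {Y S : Type*} [TopologicalSpace Y] [TopologicalSpace S]
    (f : Y → S) : Prop :=
  ∀ y : Y, ∀ V ∈ 𝓝 y, ∃ N ∈ 𝓝 y, ∃ U ∈ 𝓝 (f y), N ⊆ f ⁻¹' U ∩ V ∧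
    ∃ hm : Set.MapsTo f N U,
      IsSeparatedMap (hm.restrict f N U) ∧ IsProperMap (hm.restrict f N U)

/-- Separated locally proper maps are stable under base change: if `f : Y → S` is
separated locally proper and `g : S' → S` is continuous, then the projection
`Y ×_S S' → S'` is separated locally proper. -/
theorem stmt_3 {Y S S' : Type*} [TopologicalSpace Y] [TopologicalSpace S]
    [TopologicalSpace S'] (f : Y → S) (g : S' → S)
    (hfc : Continuous f) (hgc : Continuous g)
    (hfs : IsSeparatedMap f) (hf : IsLocallyProper f) :
    IsSeparatedMap (fun p : {p : Y × S' // f p.1 = g p.2} => p.1.2) ∧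
    IsLocallyProper (fun p : {p : Y × S' // f p.1 = g p.2} => p.1.2) := by
  set P := {p : Y × S' // f p.1 = g p.2} with hP
  have hπY : Continuous (fun p : P => p.1.1) := continuous_fst.comp continuous_subtype_val
  constructor
  · -- separatedness of the pullback
    intro p q hpq hne
    have hy : p.1.1 ≠ q.1.1 := by
      intro h
      exact hne (Subtype.ext (Prod.ext h hpq))
    have hfy : f p.1.1 = f q.1.1 := by rw [p.2, q.2]; exact congrArg g hpq
    obtain ⟨U₁, U₂, hU₁, hU₂, hp, hq, hd⟩ := hfs _ _ hfy hy
    exact ⟨(fun p : P => p.1.1) ⁻¹' U₁, (fun p : P => p.1.1) ⁻¹' U₂,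
      hU₁.preimage hπY, hU₂.preimage hπY, hp, hq, hd.preimage _⟩
  · -- local properness
    intro p V hV
    obtain ⟨t, ht, htV⟩ := mem_nhds_subtype _ p V |>.mp hV
    obtain ⟨Vy, hVy, Vs, hVs, hts⟩ := mem_nhds_prod_iff.mp ht
    obtain ⟨N, hN, U, hU, hNsub, hm, hsep, hprop⟩ := hf p.1.1 Vy hVy
    have hgU : g ⁻¹' U ∈ 𝓝 p.1.2 := hgc.continuousAt (by rw [← p.2]; exact hU)
    set U' : Set S' := g ⁻¹' U ∩ Vs with hU'def
    have hU' : U' ∈ 𝓝 p.1.2 := inter_mem hgU hVs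
    set N' : Set P := Subtype.val ⁻¹' (N ×ˢ U') with hN'def
    have hN' : N' ∈ 𝓝 p :=
      continuous_subtype_val.continuousAt.preimage_mem_nhds (prod_mem_nhds hN hU')
    have hN'mem : ∀ q : P, q ∈ N' → q.1.1 ∈ N ∧ q.1.2 ∈ U' := fun q hq => hq
    have hm' : Set.MapsTo (fun p : P => p.1.2) N' U' := fun q hq => (hN'mem q hq).2
    refine ⟨N', hN', U', hU', ?_, hm', ?_, ?_⟩
    · intro q hq
      obtain ⟨hq1, hq2⟩ := hN'mem q hq
      refine ⟨hq2, htV ?_⟩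
      exact hts ⟨(hNsub hq1).2, hq2.2⟩
    · -- separatedness of the restriction
      intro a b hab hne
      have hs' : a.1.1.2 = b.1.1.2 := congrArg Subtype.val hab
      have hyy : a.1.1.1 ≠ b.1.1.1 := by
        intro h
        exact hne (Subtype.ext (Subtype.ext (Prod.ext h hs')))
      have hmemN : ∀ c : N', c.1.1.1 ∈ N := fun c => (hN'mem c.1 c.2).1
      set π : N' → N := fun c => ⟨c.1.1.1, hmemN c⟩ with hπ
      have hπc : Continuous π :=
        Continuous.subtype_mk ((continuous_fst.comp continuous_subtype_val).comp
          continuous_subtype_val) _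
      have hfeq : hm.restrict f N U (π a) = hm.restrict f N U (π b) := by
        apply Subtype.ext
        show f a.1.1.1 = f b.1.1.1
        rw [a.1.2, b.1.2, hs']
      obtain ⟨s₁, s₂, hs₁, hs₂, ha, hb, hd⟩ := hsep (π a) (π b) hfeq
        (fun h => hyy (congrArg (fun c : N => c.1) h))
      exact ⟨π ⁻¹' s₁, π ⁻¹' s₂, hs₁.preimage hπc, hs₂.preimage hπc, ha, hb, hd.preimage _⟩
    · -- properness of the restriction
      rw [isProperMap_iff_ultrafilter]
      constructor
      · exact Continuous.restrict hm' (continuous_snd.comp continuous_subtype_val)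
      · intro 𝒰 u hu
        have hmemN : ∀ c : N', c.1.1.1 ∈ N := fun c => (hN'mem c.1 c.2).1
        set π : N' → N := fun c => ⟨c.1.1.1, hmemN c⟩ with hπ
        -- convergence of the S' coordinate
        have hus : Tendsto (fun c : N' => c.1.1.2) 𝒰 (𝓝 u.1) :=
          (continuous_subtype_val.tendsto u).comp hu
        -- convergence in U of the image filter
        have hgu : g u.1 ∈ U := u.2.1
        have hfu : Tendsto (hm.restrict f N U ∘ π) 𝒰 (𝓝 (⟨g u.1, hgu⟩ : U)) := by
          rw [nhds_subtype_eq_comap, tendsto_comap_iff]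
          have : (Subtype.val ∘ (hm.restrict f N U ∘ π)) = fun c : N' => f c.1.1.1 := rfl
          rw [this]
          have heq : (fun c : N' => f c.1.1.1) = fun c : N' => g c.1.1.2 := by
            funext c; exact c.1.2
          rw [heq]
          exact (hgc.tendsto u.1).comp hus
        obtain ⟨x, hx, hx𝒰⟩ := (isProperMap_iff_ultrafilter.mp hprop).2
          (𝒰 := 𝒰.map π) (y := ⟨g u.1, hgu⟩) (by rwa [Ultrafilter.coe_map, tendsto_map'_iff])
        have hfx : f x.1 = g u.1 := congrArg Subtype.val hx
        have hxmem : ((x.1, u.1) : Y × S') ∈ {p : Y × S' | f p.1 = g p.2} := hfx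
        refine ⟨⟨⟨(x.1, u.1), hxmem⟩, ⟨x.2, u.2⟩⟩, Subtype.ext rfl, ?_⟩
        -- convergence to the constructed point
        have hπt : Tendsto π 𝒰 (𝓝 x) := hx𝒰
        have hyt : Tendsto (fun c : N' => c.1.1.1) 𝒰 (𝓝 x.1) :=
          (continuous_subtype_val.tendsto x).comp hπt
        have h1 : Tendsto (fun c : N' => c.1.1) 𝒰 (𝓝 ((x.1, u.1) : Y × S')) := by
          rw [nhds_prod_eq]
          exact hyt.prodMk hus
        have h2 : Tendsto (fun c : N' => (c.1 : P)) 𝒰 (𝓝 (⟨(x.1, u.1), hxmem⟩ : P)) :=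
          tendsto_subtype_rng.mpr h1
        have h3 : Tendsto (fun c : N' => c) 𝒰 (𝓝 ⟨⟨(x.1, u.1), hxmem⟩, ⟨x.2, u.2⟩⟩) :=
          tendsto_subtype_rng.mpr h2
        exact h3
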